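/- Fix a ∈ [1,3] and r ∈ (0,1/16], and coefficient functions a_k : {−1,1}^k → [1,a] (with a_0 ≡ 1) for 0 ≤ k ≤ n−1, where n ≥ 1. Let ε ∈ 𝓔_n, let x = f_n(ε) ∈ K_n, and let x̂ = f_{n−1}(ε̂) where ε̂ = (ε_1,…,ε_{n−1}). Define Δ₂ = 2 Σ_{ε′ ∈ 𝓔_{n−1}, ε′ ≠ ε̂} ( ln|f_{n−1}(ε′) − x| − ln|f_{n−1}(ε′) − x̂| ). Then |Δ₂| ≤ 2 Σ_{ℓ=1}^{n−1} 2^{ℓ−1} a r^{ℓ} / ( 2(1 − ar/(1−r)) − a r^{ℓ} ). -/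

import Mathlib

noncomputable section

/-- The sign `±1 : ℝ` associated to a boolean letter. -/
def sgn (b : Bool) : ℝ := if b then 1 else -1

/-- `f_n(ε) = Σ_{k=1}^{n} (a_{k−1}(ε)/2) r^{k−1} ε_k` (0-based: sum over `k < n`). -/
def fN (r : ℝ) (A : ℕ → (ℕ → Bool) → ℝ) (n : ℕ) (ε : ℕ → Bool) : ℝ :=
  ∑ k ∈ Finset.range n, A k ε / 2 * r ^ k * sgn (ε k)

/-- A word of length `n` (element of `𝓔_n`), extended to an infinite word by `false`. -/
def extWord (n : ℕ) (σ : Fin n → Bool) : ℕ → Bool :=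
  fun k => if h : k < n then σ ⟨k, h⟩ else false

/-- The word `ε̂ = (ε_1, …, ε_{n−1})` obtained by deleting the last letter of `ε ∈ 𝓔_n`. -/
def parentWord (n : ℕ) (σ : Fin n → Bool) : Fin (n - 1) → Bool :=
  fun i => σ (Fin.castLE (Nat.sub_le n 1) i)

lemma abs_sgn (b : Bool) : |sgn b| = 1 := by cases b <;> simp [sgn]

lemma sgn_sub_abs {b1 b2 : Bool} (h : b1 ≠ b2) : |sgn b1 - sgn b2| = 2 := by
  cases b1 <;> cases b2 <;> simp [sgn] at h ⊢ <;> norm_num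

lemma logdiff {u v c d : ℝ} (hc : 0 < c) (hu : c ≤ u) (hv : c ≤ v)
    (huv : |u - v| ≤ d) : |Real.log u - Real.log v| ≤ d / c := by
  have hd : 0 ≤ d := le_trans (abs_nonneg _) huv
  have hu0 : 0 < u := lt_of_lt_of_le hc hu
  have hv0 : 0 < v := lt_of_lt_of_le hc hv
  have main : ∀ p q : ℝ, 0 < p → c ≤ p → p ≤ q → q - p ≤ d →
      Real.log q - Real.log p ≤ d / c := by
    intro p q hp0 hcp hpq hqd
    have h1 : Real.log q - Real.log p = Real.log (q / p) :=
      (Real.log_div (by linarith) (by linarith)).symm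
    have h2 : Real.log (q / p) ≤ q / p - 1 :=
      Real.log_le_sub_one_of_pos (div_pos (by linarith) hp0)
    have h3 : q / p - 1 = (q - p) / p := by field_simp
    have h4 : (q - p) / p ≤ d / c := div_le_div₀ hd hqd hc hcp
    linarith
  rcases le_total u v with h | h
  · rw [abs_sub_comm, abs_of_nonneg (by linarith [Real.log_le_log hu0 h] :
      (0:ℝ) ≤ Real.log v - Real.log u)]
    exact main u v hu0 hu h (by rw [abs_sub_comm, abs_of_nonneg (by linarith)] at huv; linarith)
  · rw [abs_of_nonneg (by linarith [Real.log_le_log hv0 h] :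
      (0:ℝ) ≤ Real.log u - Real.log v)]
    exact main v u hv0 hv h (by rw [abs_of_nonneg (by linarith)] at huv; linarith)

lemma sep {a r : ℝ} (ha1 : 1 ≤ a) (hr0 : 0 < r) (hr1 : r < 1)
    {A : ℕ → (ℕ → Bool) → ℝ} {m k : ℕ} (hk : k < m)
    (hAbd : ∀ j < m, ∀ ε, 1 ≤ A j ε ∧ A j ε ≤ a)
    (hAdep : ∀ j < m, ∀ ε ε', (∀ i < j, ε i = ε' i) → A j ε = A j ε')
    {w1 w2 : ℕ → Bool} (hag : ∀ j < k, w1 j = w2 j) (hne : w1 k ≠ w2 k) :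
    r ^ k * (1 - a * r / (1 - r)) ≤ |fN r A m w1 - fN r A m w2| := by
  have h1r : (0:ℝ) < 1 - r := by linarith
  set F : ℕ → ℝ := fun j => A j w1 / 2 * r ^ j * sgn (w1 j)
      - A j w2 / 2 * r ^ j * sgn (w2 j) with hF
  have hsplit : fN r A m w1 - fN r A m w2 = ∑ j ∈ Finset.range m, F j := by
    rw [fN, fN, ← Finset.sum_sub_distrib]
  have h0 : ∀ j ∈ Finset.range k, F j = 0 := by
    intro j hj
    have hj' := Finset.mem_range.mp hj
    have hA : A j w1 = A j w2 :=
      hAdep j (hj'.trans hk) w1 w2 (fun i hi => hag i (hi.trans hj'))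
    simp only [hF, hag j hj', hA, sub_self]
  have hrange : ∑ j ∈ Finset.range m, F j = F k + ∑ j ∈ Finset.Ico (k+1) m, F j := by
    rw [← Finset.sum_range_add_sum_Ico F (Nat.succ_le_of_lt hk), Finset.sum_range_succ,
      Finset.sum_eq_zero h0, zero_add]
  have hAk : A k w1 = A k w2 := hAdep k hk w1 w2 hag
  have hAk1 : 1 ≤ A k w1 := (hAbd k hk w1).1
  have hFk : |F k| = A k w1 * r ^ k := by
    have he : F k = A k w1 / 2 * r ^ k * (sgn (w1 k) - sgn (w2 k)) := by
      simp only [hF, ← hAk]; ring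
    rw [he, abs_mul]
    have hnn : 0 ≤ A k w1 / 2 * r ^ k :=
      mul_nonneg (by linarith) (pow_pos hr0 k).le
    rw [sgn_sub_abs hne, abs_of_nonneg hnn]
    ring
  have hterm : ∀ j, j < m → ∀ w : ℕ → Bool, |A j w / 2 * r ^ j * sgn (w j)| ≤ a / 2 * r ^ j := by
    intro j hj w
    have h1 := (hAbd j hj w).1
    have h2 := (hAbd j hj w).2
    have hr : (0:ℝ) < r ^ j := pow_pos hr0 j
    rw [abs_mul, abs_sgn, mul_one, abs_of_nonneg (by nlinarith)]
    nlinarith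
  have htail : |∑ j ∈ Finset.Ico (k+1) m, F j| ≤ a * r ^ (k+1) / (1 - r) := by
    calc |∑ j ∈ Finset.Ico (k+1) m, F j| ≤ ∑ j ∈ Finset.Ico (k+1) m, |F j| :=
          Finset.abs_sum_le_sum_abs _ _
      _ ≤ ∑ j ∈ Finset.Ico (k+1) m, a * r ^ j := by
          refine Finset.sum_le_sum fun j hj => ?_
          have hjm := (Finset.mem_Ico.mp hj).2
          calc |F j| ≤ |A j w1 / 2 * r ^ j * sgn (w1 j)| + |A j w2 / 2 * r ^ j * sgn (w2 j)| :=
                abs_sub _ _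
            _ ≤ a / 2 * r ^ j + a / 2 * r ^ j := add_le_add (hterm j hjm w1) (hterm j hjm w2)
            _ = a * r ^ j := by ring
      _ = a * ∑ j ∈ Finset.Ico (k+1) m, r ^ j := by rw [Finset.mul_sum]
      _ ≤ a * (r ^ (k+1) / (1 - r)) := by
          refine mul_le_mul_of_nonneg_left ?_ (by linarith)
          exact geom_sum_Ico_le_of_lt_one hr0.le hr1
      _ = a * r ^ (k+1) / (1 - r) := by ring
  have hFk1 : r ^ k ≤ |F k| := by
    rw [hFk]; nlinarith [pow_pos hr0 k]
  have h5 : |F k| ≤ |F k + ∑ j ∈ Finset.Ico (k+1) m, F j| + |∑ j ∈ Finset.Ico (k+1) m, F j| := by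
    have := abs_add_le (F k + ∑ j ∈ Finset.Ico (k+1) m, F j) (-(∑ j ∈ Finset.Ico (k+1) m, F j))
    simpa using this
  have heq : r ^ k * (1 - a * r / (1 - r)) = r ^ k - a * r ^ (k+1) / (1 - r) := by
    field_simp; ring
  rw [hsplit, hrange]
  linarith

/-- With `a ∈ [1,3]`, `r ∈ (0,1/16]`, coefficients `a_k(ε) ∈ [1,a]` (depending
only on the first `k` letters, `a_0 ≡ 1`) for `k ≤ n−1`, `x = f_n(ε) ∈ K_n` and
`x̂ = f_{n−1}(ε̂) ∈ K_{n−1}` its parent, the quantity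
`Δ₂ = 2 Σ_{ε′ ∈ 𝓔_{n−1}, ε′ ≠ ε̂} ( ln|f_{n−1}(ε′) − x| − ln|f_{n−1}(ε′) − x̂| )`
satisfies `|Δ₂| ≤ 2 Σ_{ℓ=1}^{n−1} 2^{ℓ−1} a r^ℓ / ( 2(1 − ar/(1−r)) − a r^ℓ )`. -/
theorem stmt4 (a r : ℝ) (ha1 : 1 ≤ a) (ha3 : a ≤ 3) (hr0 : 0 < r) (hr1 : r ≤ 1 / 16)
    (n : ℕ) (hn : 1 ≤ n)
    (A : ℕ → (ℕ → Bool) → ℝ)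
    (hA0 : ∀ ε, A 0 ε = 1)
    (hAbd : ∀ k, k ≤ n - 1 → ∀ ε, 1 ≤ A k ε ∧ A k ε ≤ a)
    (hAdep : ∀ k, k ≤ n - 1 → ∀ ε ε', (∀ j < k, ε j = ε' j) → A k ε = A k ε')
    (σ : Fin n → Bool) (x xh Δ₂ : ℝ)
    (hx : x = fN r A n (extWord n σ))
    (hxh : xh = fN r A (n - 1) (extWord (n - 1) (parentWord n σ)))
    (hΔ₂ : Δ₂ = 2 * ∑ σ' ∈ Finset.univ.erase (parentWord n σ),
        (Real.log |fN r A (n - 1) (extWord (n - 1) σ') - x| -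
          Real.log |fN r A (n - 1) (extWord (n - 1) σ') - xh|)) :
    |Δ₂| ≤ 2 * ∑ ℓ ∈ Finset.Icc 1 (n - 1),
        (2 : ℝ) ^ (ℓ - 1) * a * r ^ ℓ / (2 * (1 - a * r / (1 - r)) - a * r ^ ℓ) := by
  classical
  obtain ⟨m, rfl⟩ : ∃ m, n = m + 1 := ⟨n - 1, by omega⟩
  simp only [Nat.add_sub_cancel] at hAbd hAdep ⊢
  have hr1' : r < 1 := lt_of_le_of_lt hr1 (by norm_num)
  have h1r : (0:ℝ) < 1 - r := by linarith
  set D := 1 - a * r / (1 - r) with hD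
  clear_value D
  have hD45 : 4/5 ≤ D := by
    rw [hD]
    have : a * r / (1 - r) ≤ 1/5 := by
      rw [div_le_iff₀ h1r]; nlinarith
    linarith
  have hden : ∀ ℓ : ℕ, 1 ≤ ℓ → 0 < 2 * D - a * r ^ ℓ := by
    intro ℓ hℓ
    have h1 : r ^ ℓ ≤ r ^ 1 := pow_le_pow_of_le_one hr0.le hr1'.le hℓ
    have h2 : (0:ℝ) < r ^ ℓ := pow_pos hr0 ℓ
    rw [pow_one] at h1
    have h3 : a * r ^ ℓ ≤ a * r := mul_le_mul_of_nonneg_left h1 (by linarith)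
    have h4 : a * r ≤ 3 * (1/16) := by nlinarith
    linarith
  set τ := parentWord (m+1) σ with hτ
  have hxh' : xh = fN r A m (extWord m τ) := hxh
  have hΔ₂' : Δ₂ = 2 * ∑ σ' ∈ (Finset.univ.erase τ : Finset (Fin m → Bool)),
      (Real.log |fN r A m (extWord m σ') - x| -
        Real.log |fN r A m (extWord m σ') - xh|) := hΔ₂
  have hagree : ∀ j < m, extWord (m+1) σ j = extWord m τ j := by
    intro j hj
    simp only [extWord, hτ, parentWord, dif_pos hj, dif_pos (hj.trans (Nat.lt_succ_self m)),
      Fin.castLE_mk]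
  have hAbd' : ∀ j < m, ∀ ε, 1 ≤ A j ε ∧ A j ε ≤ a := fun j hj ε => hAbd j (by omega) ε
  have hAdep' : ∀ j < m, ∀ ε ε', (∀ i < j, ε i = ε' i) → A j ε = A j ε' :=
    fun j hj => hAdep j (by omega)
  have hfNm : fN r A m (extWord (m+1) σ) = fN r A m (extWord m τ) := by
    refine Finset.sum_congr rfl fun j hj => ?_
    have hj' := Finset.mem_range.mp hj
    rw [hagree j hj', hAdep' j hj' _ _ (fun i hi => hagree i (hi.trans hj'))]
  have hx' : x - xh = A m (extWord (m+1) σ) / 2 * r ^ m * sgn (extWord (m+1) σ m) := by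
    rw [hx, hxh']
    simp only [fN] at hfNm ⊢
    rw [Finset.sum_range_succ, hfNm]
    ring
  have hAm := hAbd m (le_refl m) (extWord (m+1) σ)
  have hxd : |x - xh| ≤ a * r ^ m / 2 := by
    rw [hx', abs_mul, abs_sgn, mul_one,
      abs_of_nonneg (mul_nonneg (by linarith [hAm.1]) (pow_pos hr0 m).le)]
    have hrp : (0:ℝ) < r ^ m := pow_pos hr0 m
    nlinarith [hAm.2]
  set fd : (Fin m → Bool) → ℕ := fun σ' =>
    if h : ∃ j, extWord m σ' j ≠ extWord m τ j then Nat.find h else 0 with hfd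
  set E := Finset.univ.erase τ with hE
  have hEdef : ∀ σ' ∈ E, σ' ≠ τ := fun σ' h => (Finset.mem_erase.mp h).1
  have hex : ∀ σ' : Fin m → Bool, σ' ≠ τ → ∃ j, extWord m σ' j ≠ extWord m τ j := by
    intro σ' hne
    by_contra h
    push_neg at h
    apply hne
    funext i
    have := h i.val
    simpa [extWord, i.isLt] using this
  have hfd_lt : ∀ σ' : Fin m → Bool, σ' ≠ τ → fd σ' < m ∧
      extWord m σ' (fd σ') ≠ extWord m τ (fd σ') ∧
      ∀ j < fd σ', extWord m σ' j = extWord m τ j := by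
    intro σ' hne
    have h := hex σ' hne
    simp only [hfd]
    rw [dif_pos h]
    refine ⟨?_, Nat.find_spec h, fun j hj => not_not.mp (Nat.find_min h hj)⟩
    obtain ⟨j, hj⟩ := id h
    have hjm : j < m := by
      by_contra hge
      simp only [extWord, dif_neg hge] at hj
      exact hj rfl
    exact lt_of_le_of_lt (Nat.find_min' h hj) hjm
  have hBnn : ∀ ℓ : ℕ, 1 ≤ ℓ → 0 ≤ a * r ^ ℓ / (2 * D - a * r ^ ℓ) := fun ℓ hℓ =>
    div_nonneg (by positivity) (hden ℓ hℓ).le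
  have key : ∀ σ' ∈ E,
      abs (Real.log |fN r A m (extWord m σ') - x| - Real.log |fN r A m (extWord m σ') - xh|)
        ≤ a * r ^ (m - fd σ') / (2 * D - a * r ^ (m - fd σ')) := by
    intro σ' hσ'
    obtain ⟨hklt, hkspec, hkmin⟩ := hfd_lt σ' (hEdef σ' hσ')
    set k := fd σ' with hk
    clear_value k
    set ℓ := m - k with hℓ
    clear_value ℓ
    have hℓ1 : 1 ≤ ℓ := by omega
    have hkl : k + ℓ = m := by omega
    have hrm : r ^ m = r ^ k * r ^ ℓ := by rw [← pow_add, hkl]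
    set y := fN r A m (extWord m σ') with hy
    clear_value y
    have hsep : r ^ k * D ≤ |y - xh| := by
      rw [hy, hxh', hD]
      exact sep ha1 hr0 hr1' hklt hAbd' hAdep' hkmin hkspec
    set c := r ^ k / 2 * (2 * D - a * r ^ ℓ) with hc
    clear_value c
    have hc0 : 0 < c := by
      rw [hc]
      exact mul_pos (by positivity) (hden ℓ hℓ1)
    have hceq : c = r ^ k * D - a * r ^ m / 2 := by rw [hc, hrm]; ring
    have h6 : |y - xh| - |y - x| ≤ |x - xh| := by
      have h7 := abs_sub_abs_le_abs_sub (y - xh) (y - x)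
      have h8 : (y - xh) - (y - x) = x - xh := by ring
      rwa [h8] at h7
    have huv : abs (|y - x| - |y - xh|) ≤ a * r ^ m / 2 := by
      have h7 := abs_abs_sub_abs_le_abs_sub (y - x) (y - xh)
      have h8 : (y - x) - (y - xh) = xh - x := by ring
      rw [h8, abs_sub_comm xh x] at h7
      exact h7.trans hxd
    have hu : c ≤ |y - x| := by rw [hceq]; linarith
    have hv : c ≤ |y - xh| := by
      have hnn : (0:ℝ) ≤ a * r ^ m / 2 := by positivity
      rw [hceq]; linarith
    have hld := logdiff hc0 hu hv huv
    have hdc : a * r ^ m / 2 / c = a * r ^ ℓ / (2 * D - a * r ^ ℓ) := by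
      rw [hc, hrm, show a * (r ^ k * r ^ ℓ) / 2 = r ^ k / 2 * (a * r ^ ℓ) by ring]
      exact mul_div_mul_left _ _ (by positivity)
    rw [hdc] at hld
    exact hld
  have hmaps : ∀ σ' ∈ E, m - fd σ' ∈ Finset.Icc 1 m := by
    intro σ' hσ'
    have := (hfd_lt σ' (hEdef σ' hσ')).1
    rw [Finset.mem_Icc]
    omega
  have hcard : ∀ ℓ ∈ Finset.Icc 1 m,
      (E.filter (fun σ' => m - fd σ' = ℓ)).card ≤ 2 ^ (ℓ - 1) := by
    intro ℓ hℓmem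
    obtain ⟨hℓ1, hℓm⟩ := Finset.mem_Icc.mp hℓmem
    set k := m - ℓ with hkdef
    clear_value k
    have hfdk : ∀ σ' ∈ E.filter (fun σ' => m - fd σ' = ℓ), fd σ' = k := by
      intro σ' hσ'
      obtain ⟨hσE, hgl⟩ := Finset.mem_filter.mp hσ'
      have := (hfd_lt σ' (hEdef σ' hσE)).1
      omega
    have hinj := Finset.card_le_card_of_injOn
      (s := E.filter (fun σ' => m - fd σ' = ℓ)) (t := Finset.univ)
      (f := fun (σ' : Fin m → Bool) (j : Fin (ℓ - 1)) =>
        σ' (⟨k + 1 + j.val, by have := j.isLt; omega⟩ : Fin m))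
      (fun σ' _ => Finset.mem_univ _) ?_
    · calc (E.filter (fun σ' => m - fd σ' = ℓ)).card
          ≤ (Finset.univ : Finset (Fin (ℓ - 1) → Bool)).card := hinj
        _ = 2 ^ (ℓ - 1) := by simp
    · intro σ₁ h₁ σ₂ h₂ hF
      have hk₁ := hfdk σ₁ h₁
      have hk₂ := hfdk σ₂ h₂
      obtain ⟨hlt₁, hs₁, hm₁⟩ := hfd_lt σ₁ (hEdef σ₁ (Finset.mem_filter.mp h₁).1)
      obtain ⟨hlt₂, hs₂, hm₂⟩ := hfd_lt σ₂ (hEdef σ₂ (Finset.mem_filter.mp h₂).1)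
      rw [hk₁] at hs₁ hm₁
      rw [hk₂] at hs₂ hm₂
      have hkm : k < m := by omega
      funext i
      rcases lt_trichotomy i.val k with h | h | h
      · have e₁ := hm₁ i.val h
        have e₂ := hm₂ i.val h
        simp only [extWord, dif_pos i.isLt, Fin.eta] at e₁ e₂
        rw [e₁, e₂]
      · have hi : i = (⟨k, hkm⟩ : Fin m) := Fin.ext h
        simp only [extWord, dif_pos hkm] at hs₁ hs₂
        have hbool : ∀ x y z : Bool, x ≠ z → y ≠ z → x = y := by decide
        rw [hi]
        exact hbool _ _ _ hs₁ hs₂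
      · have hj : i.val - (k+1) < ℓ - 1 := by have := i.isLt; omega
        have hcf := congrFun hF ⟨i.val - (k+1), hj⟩
        simp only at hcf
        have hi : i = (⟨k + 1 + (i.val - (k+1)), by have := i.isLt; omega⟩ : Fin m) :=
          Fin.ext (by simp; omega)
        rw [hi]
        exact hcf
  rw [hΔ₂', abs_mul, abs_two]
  calc (2:ℝ) * |∑ σ' ∈ E,
        (Real.log |fN r A m (extWord m σ') - x| - Real.log |fN r A m (extWord m σ') - xh|)|
      ≤ 2 * ∑ σ' ∈ E,
        abs (Real.log |fN r A m (extWord m σ') - x| - Real.log |fN r A m (extWord m σ') - xh|) :=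
        mul_le_mul_of_nonneg_left (Finset.abs_sum_le_sum_abs _ _) (by norm_num)
    _ ≤ 2 * ∑ σ' ∈ E, a * r ^ (m - fd σ') / (2 * D - a * r ^ (m - fd σ')) :=
        mul_le_mul_of_nonneg_left (Finset.sum_le_sum key) (by norm_num)
    _ = 2 * ∑ ℓ ∈ Finset.Icc 1 m, ∑ σ' ∈ E.filter (fun σ' => m - fd σ' = ℓ),
          a * r ^ (m - fd σ') / (2 * D - a * r ^ (m - fd σ')) := by
        exact congrArg (fun z => 2 * z) (Eq.symm (Finset.sum_fiberwise_of_maps_to hmaps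
          fun σ' => a * r ^ (m - fd σ') / (2 * D - a * r ^ (m - fd σ'))))
    _ ≤ 2 * ∑ ℓ ∈ Finset.Icc 1 m, (2:ℝ) ^ (ℓ - 1) * (a * r ^ ℓ / (2 * D - a * r ^ ℓ)) := by
        refine mul_le_mul_of_nonneg_left (Finset.sum_le_sum fun ℓ hℓ => ?_) (by norm_num)
        obtain ⟨hℓ1, hℓm⟩ := Finset.mem_Icc.mp hℓ
        have hsum_eq : ∑ σ' ∈ E.filter (fun σ' => m - fd σ' = ℓ),
            a * r ^ (m - fd σ') / (2 * D - a * r ^ (m - fd σ'))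
            = (E.filter (fun σ' => m - fd σ' = ℓ)).card * (a * r ^ ℓ / (2 * D - a * r ^ ℓ)) := by
          rw [Finset.sum_congr rfl (fun σ' hσ' => by
            rw [(Finset.mem_filter.mp hσ').2]), Finset.sum_const, nsmul_eq_mul]
        rw [hsum_eq]
        refine mul_le_mul_of_nonneg_right ?_ (hBnn ℓ hℓ1)
        calc ((E.filter (fun σ' => m - fd σ' = ℓ)).card : ℝ)
            ≤ ((2 ^ (ℓ - 1) : ℕ) : ℝ) := by exact_mod_cast hcard ℓ hℓ
          _ = (2:ℝ) ^ (ℓ - 1) := by push_cast; ring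
    _ = 2 * ∑ ℓ ∈ Finset.Icc 1 m,
          (2:ℝ) ^ (ℓ - 1) * a * r ^ ℓ / (2 * D - a * r ^ ℓ) := by
        exact congrArg _ (Finset.sum_congr rfl fun ℓ _ => by ring)

end
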